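/- arXiv:2008.00256 — 3 statements merged into one kernel-verified Lean document; each statement's English description precedes it below -/
import Mathlib

section
/- Let α > 0, N ∈ ℕ, L > 0 with 1 − 2^{N − αL/2} ≥ 1/2, and x, h ∈ ℝ^d with x ≠ 0 such that |x + ℓh| ≥ 2^{L/2}|x| for all ℓ ∈ {1, …, N}. Then the N-th difference of g(y) = |y|^{−α} satisfies |Δ_h^N g(x)| ≥ (1/2)|x|^{−α}. -/
/-- The `N`-th order forward difference of a real-valued function. -/
noncomputable def forwardDiffR {E : Type*} [AddCommGroup E] [Module ℝ E]
    (N : ℕ) (h : E) (f : E → ℝ) (x : E) : ℝ :=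
  ∑ ℓ ∈ Finset.range (N + 1), (-1 : ℝ) ^ (N - ℓ) * (N.choose ℓ : ℝ) * f (x + (ℓ : ℝ) • h)

/-- Lower bound for the `N`-th difference of `g(y) = |y|^{-α}`: if `1 − 2^{N−αL/2} ≥ 1/2`
and `|x + ℓh| ≥ 2^{L/2}|x|` for `ℓ = 1,…,N`, then `|Δ_h^N g(x)| ≥ (1/2)|x|^{-α}`. -/
theorem stmt_11 (d N : ℕ) (hN : 1 ≤ N) (α L : ℝ) (hα : 0 < α) (hL : 0 < L)
    (hNL : (1 : ℝ) - 2 ^ ((N : ℝ) - α * L / 2) ≥ 1 / 2)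
    (x h : EuclideanSpace ℝ (Fin d)) (hx : x ≠ 0)
    (hsep : ∀ ℓ : ℕ, 1 ≤ ℓ → ℓ ≤ N → (2 : ℝ) ^ (L / 2) * ‖x‖ ≤ ‖x + (ℓ : ℝ) • h‖) :
    (1 / 2) * ‖x‖ ^ (-α) ≤ |forwardDiffR N h (fun y => ‖y‖ ^ (-α)) x| := by
  have hxpos : (0:ℝ) < ‖x‖ := norm_pos_iff.mpr hx
  have hxa : (0:ℝ) < ‖x‖ ^ (-α) := Real.rpow_pos_of_pos hxpos _
  have hc : (0:ℝ) < (2:ℝ) ^ (L/2) := Real.rpow_pos_of_pos two_pos _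
  set c : ℝ := (2:ℝ) ^ ((L/2) * (-α)) * ‖x‖ ^ (-α) with hcdef
  have hcpos : 0 < c := by positivity
  have key : ∀ ℓ : ℕ, 1 ≤ ℓ → ℓ ≤ N → ‖x + (ℓ:ℝ) • h‖ ^ (-α) ≤ c := by
    intro ℓ h1 h2
    have h3 := hsep ℓ h1 h2
    calc ‖x + (ℓ:ℝ) • h‖ ^ (-α) ≤ ((2:ℝ) ^ (L/2) * ‖x‖) ^ (-α) :=
          Real.rpow_le_rpow_of_nonpos (by positivity) h3 (by linarith)
      _ = c := by
          rw [hcdef, Real.mul_rpow hc.le hxpos.le, ← Real.rpow_mul (by norm_num : (0:ℝ) ≤ 2)]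
  set g : EuclideanSpace ℝ (Fin d) → ℝ := fun y => ‖y‖ ^ (-α) with hg
  set R : ℝ := ∑ i ∈ Finset.range N,
      (-1 : ℝ) ^ (N - (i+1)) * (N.choose (i+1) : ℝ) * g (x + ((i+1 : ℕ) : ℝ) • h) with hR
  have hsplit : forwardDiffR N h g x = R + (-1:ℝ)^N * ‖x‖ ^ (-α) := by
    rw [forwardDiffR, Finset.sum_range_succ']
    simp [hg, hR]
  -- bound |R|
  have hRbound : |R| ≤ ((2:ℝ)^N - 1) * c := by
    have h1 : |R| ≤ ∑ i ∈ Finset.range N, (N.choose (i+1) : ℝ) * c := by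
      refine (Finset.abs_sum_le_sum_abs _ _).trans (Finset.sum_le_sum ?_)
      intro i hi
      rw [Finset.mem_range] at hi
      have hterm := key (i+1) (Nat.le_add_left 1 i) hi
      have habs : |(-1 : ℝ) ^ (N - (i+1)) * (N.choose (i+1) : ℝ) * g (x + ((i+1 : ℕ) : ℝ) • h)|
          = (N.choose (i+1) : ℝ) * g (x + ((i+1 : ℕ) : ℝ) • h) := by
        rw [abs_mul, abs_mul, abs_pow, abs_neg, abs_one, one_pow, one_mul,
          Nat.abs_cast, abs_of_nonneg (by positivity)]
      rw [habs]
      exact mul_le_mul_of_nonneg_left hterm (Nat.cast_nonneg _)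
    have h2 : ∑ i ∈ Finset.range N, (N.choose (i+1) : ℝ) * c = ((2:ℝ)^N - 1) * c := by
      rw [← Finset.sum_mul]
      congr 1
      have := Nat.sum_range_choose N
      have h3 : ∑ i ∈ Finset.range (N+1), (N.choose i : ℝ) = 2^N := by
        exact_mod_cast congrArg (Nat.cast : ℕ → ℝ) this
      rw [Finset.sum_range_succ'] at h3
      simp at h3
      linarith
    linarith
  have habsR : ‖x‖ ^ (-α) - ((2:ℝ)^N - 1) * c ≤ |forwardDiffR N h g x| := by
    have h4 : |(-1:ℝ)^N * ‖x‖ ^ (-α)| = ‖x‖ ^ (-α) := by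
      rw [abs_mul, abs_pow, abs_neg, abs_one, one_pow, one_mul, abs_of_pos hxa]
    have h5 : |(-1:ℝ)^N * ‖x‖ ^ (-α)| - |R| ≤ |forwardDiffR N h g x| := by
      rw [hsplit, add_comm]
      have := abs_sub_abs_le_abs_sub ((-1:ℝ)^N * ‖x‖ ^ (-α)) (-R)
      simp only [sub_neg_eq_add, abs_neg] at this
      linarith [this, abs_add_le R ((-1:ℝ)^N * ‖x‖ ^ (-α))]
    rw [h4] at h5
    linarith
  -- finish: (2^N) * c = 2^(N - αL/2) * ‖x‖^(-α) ≤ (1/2) ‖x‖^(-α)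
  have hfin : (2:ℝ)^N * c ≤ (1/2) * ‖x‖ ^ (-α) := by
    have he : (2:ℝ)^N * (2:ℝ) ^ ((L/2) * (-α)) = (2:ℝ) ^ ((N:ℝ) - α * L / 2) := by
      rw [← Real.rpow_natCast 2 N, ← Real.rpow_add two_pos]
      ring_nf
    have h6 : (2:ℝ) ^ ((N:ℝ) - α * L / 2) ≤ 1/2 := by linarith
    calc (2:ℝ)^N * c = (2:ℝ) ^ ((N:ℝ) - α * L / 2) * ‖x‖ ^ (-α) := by
          rw [hcdef, ← mul_assoc, he]
      _ ≤ (1/2) * ‖x‖ ^ (-α) := mul_le_mul_of_nonneg_right h6 hxa.le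
  have : ((2:ℝ)^N - 1) * c ≤ (2:ℝ)^N * c - c := by ring_nf; linarith
  nlinarith [habsR, hfin, hcpos, hxa]
end

section
/- Let 1 ≤ p < u < ∞, let ψ : ℝ^d → [0,1] be measurable with ψ(x) = 1 for |x| ≤ 1 and ψ(x) = 0 for |x| ≥ 3/2, and set f_α(x) = ψ(x)|x|^{−α} for α > 0. Then f_α ∈ M^u_p(ℝ^d) if α ≤ d/u, and f_α ∉ M^u_p(ℝ^d) if α > d/u. Moreover, for α = d/u, the quantity |B(0,r)|^{1/u − 1/p}(∫_{B(0,r)} |f_α|^p dx)^{1/p} does not tend to 0 as r → 0, hence f_{d/u} does not belong to the closure of smooth bounded functions in M^u_p. -/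
open MeasureTheory Metric ENNReal Filter Topology

lemma stmt16_rpow_antitone {x y : ℝ≥0∞} (hxy : x ≤ y) {z : ℝ} (hz : z ≤ 0) :
    y ^ z ≤ x ^ z := by
  have h := ENNReal.rpow_le_rpow hxy (neg_nonneg.2 hz)
  calc y ^ z = (y ^ (-z))⁻¹ := by rw [← ENNReal.rpow_neg, neg_neg]
    _ ≤ (x ^ (-z))⁻¹ := ENNReal.inv_le_inv.2 h
    _ = x ^ z := by rw [← ENNReal.rpow_neg, neg_neg]

lemma stmt16_key_real (R β : ℝ) (hR : 0 < R) (d k : ℕ) :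
    (R * 2⁻¹ ^ (k + 1)) ^ (-β) * (R * 2⁻¹ ^ k) ^ (d : ℝ) =
      R ^ ((d : ℝ) - β) * 2 ^ β * ((2⁻¹ : ℝ) ^ ((d : ℝ) - β)) ^ k := by
  have h2 : (0:ℝ) < 2⁻¹ := by norm_num
  have hpk : (0:ℝ) < 2⁻¹ ^ k := pow_pos h2 k
  have hpk1 : (0:ℝ) < 2⁻¹ ^ (k+1) := pow_pos h2 _
  have hL : (0:ℝ) < (R * 2⁻¹ ^ (k + 1)) ^ (-β) * (R * 2⁻¹ ^ k) ^ (d : ℝ) := by positivity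
  have hRHS : (0:ℝ) < R ^ ((d : ℝ) - β) * 2 ^ β * ((2⁻¹ : ℝ) ^ ((d : ℝ) - β)) ^ k := by positivity
  refine Real.log_injOn_pos (Set.mem_Ioi.2 hL) (Set.mem_Ioi.2 hRHS) ?_
  rw [Real.log_mul (by positivity) (by positivity), Real.log_mul (by positivity) (by positivity),
    Real.log_mul (by positivity) (by positivity), Real.log_rpow (by positivity),
    Real.log_rpow (by positivity), Real.log_rpow hR, Real.log_rpow (by norm_num : (0:ℝ) < 2),
    Real.log_pow, Real.log_rpow h2, Real.log_mul hR.ne' hpk1.ne', Real.log_mul hR.ne' hpk.ne',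
    Real.log_pow, Real.log_pow, Real.log_inv]
  push_cast
  ring

lemma stmt16_cover {E : Type*} [NormedAddCommGroup E] (R : ℝ) (hR : 0 < R) :
    ball (0 : E) R ⊆ (⋃ k : ℕ, (ball (0:E) (R * 2⁻¹ ^ k) \ ball 0 (R * 2⁻¹ ^ (k+1)))) ∪ {0} := by
  intro x hx
  rcases eq_or_ne x 0 with h | h
  · exact Or.inr (by simp [h])
  left
  have hx0 : 0 < ‖x‖ := norm_pos_iff.2 h
  have hxR : ‖x‖ < R := by simpa [mem_ball_zero_iff] using hx
  have hex : ∃ k : ℕ, R * 2⁻¹ ^ (k+1) ≤ ‖x‖ := by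
    obtain ⟨n, hn⟩ := exists_pow_lt_of_lt_one (div_pos hx0 hR) (by norm_num : (2⁻¹:ℝ) < 1)
    refine ⟨n, ?_⟩
    have h1 : (2⁻¹:ℝ) ^ (n+1) ≤ 2⁻¹ ^ n := by
      apply pow_le_pow_of_le_one (by norm_num) (by norm_num); omega
    have h2 : R * 2⁻¹ ^ n < R * (‖x‖ / R) := mul_lt_mul_of_pos_left hn hR
    rw [mul_div_cancel₀ _ hR.ne'] at h2
    nlinarith [mul_le_mul_of_nonneg_left h1 hR.le]
  classical
  set k := Nat.find hex with hk
  refine Set.mem_iUnion.2 ⟨k, ?_, ?_⟩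
  · rw [mem_ball_zero_iff]
    match hk2 : k with
    | 0 => simpa using hxR
    | m + 1 =>
      have := Nat.find_min hex (by omega : m < k)
      push_neg at this
      simpa using this
  · rw [mem_ball_zero_iff]
    push_neg
    exact Nat.find_spec hex

/-- constant (not including the volume of the unit ball) in the dyadic estimate -/
noncomputable def stmt16Cst (d : ℕ) (β : ℝ) : ℝ≥0∞ :=
  ENNReal.ofReal (2 ^ β) * (1 - ENNReal.ofReal ((2⁻¹:ℝ) ^ ((d:ℝ) - β)))⁻¹

lemma stmt16_volball (d : ℕ) (hd : 0 < d) (y : EuclideanSpace ℝ (Fin d)) {r : ℝ} (hr : 0 ≤ r) :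
    volume (ball y r) = ENNReal.ofReal (r ^ d) * volume (ball (0 : EuclideanSpace ℝ (Fin d)) 1) := by
  have : Nontrivial (EuclideanSpace ℝ (Fin d)) :=
    Module.nontrivial_of_finrank_pos (R := ℝ) (by simpa using hd)
  rw [Measure.addHaar_ball volume y hr, finrank_euclideanSpace_fin]

lemma stmt16_Cst_ne_top (d : ℕ) (β : ℝ) (hβd : β < d) : stmt16Cst d β ≠ ∞ := by
  have hq : ENNReal.ofReal ((2⁻¹:ℝ) ^ ((d:ℝ) - β)) < 1 :=
    ENNReal.ofReal_lt_one.2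
      (Real.rpow_lt_one (x := 2⁻¹) (z := (d:ℝ) - β) (by norm_num) (by norm_num) (by linarith))
  refine ENNReal.mul_ne_top ofReal_ne_top ?_
  rw [ENNReal.inv_ne_top]
  exact (tsub_pos_of_lt hq).ne'

lemma stmt16_lemA (d : ℕ) (hd : 0 < d) {β : ℝ} (hβ : 0 < β) {R : ℝ} (hR : 0 < R) :
    ∫⁻ x in ball (0 : EuclideanSpace ℝ (Fin d)) R, ENNReal.ofReal (‖x‖ ^ (-β)) ≤
      ENNReal.ofReal (R ^ ((d:ℝ) - β)) * stmt16Cst d β *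
        volume (ball (0 : EuclideanSpace ℝ (Fin d)) 1) := by
  have : Nontrivial (EuclideanSpace ℝ (Fin d)) :=
    Module.nontrivial_of_finrank_pos (R := ℝ) (by simpa using hd)
  set E := EuclideanSpace ℝ (Fin d)
  set f : E → ℝ≥0∞ := fun x => ENNReal.ofReal (‖x‖ ^ (-β)) with hf
  set A : ℕ → Set E := fun k => ball (0:E) (R * 2⁻¹ ^ k) \ ball 0 (R * 2⁻¹ ^ (k+1)) with hA
  have hterm : ∀ k : ℕ, ∫⁻ x in A k, f x ≤
      ENNReal.ofReal (R ^ ((d:ℝ) - β) * 2 ^ β) *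
        ENNReal.ofReal ((2⁻¹:ℝ) ^ ((d:ℝ) - β)) ^ k *
        volume (ball (0:E) 1) := by
    intro k
    have hmA : MeasurableSet (A k) := measurableSet_ball.diff measurableSet_ball
    have hb : (0:ℝ) < R * 2⁻¹ ^ (k+1) := by positivity
    have step1 : ∫⁻ x in A k, f x ≤ ∫⁻ _ in A k, ENNReal.ofReal ((R * 2⁻¹ ^ (k+1)) ^ (-β)) := by
      refine setLIntegral_mono' hmA fun x hx => ?_
      refine ENNReal.ofReal_le_ofReal ?_
      refine Real.rpow_le_rpow_of_nonpos hb ?_ (by linarith)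
      have := hx.2
      rw [mem_ball_zero_iff] at this
      push_neg at this
      exact this
    refine step1.trans ?_
    rw [setLIntegral_const]
    have hAsub : volume (A k) ≤ volume (ball (0:E) (R * 2⁻¹ ^ k)) :=
      measure_mono Set.diff_subset
    calc ENNReal.ofReal ((R * 2⁻¹ ^ (k+1)) ^ (-β)) * volume (A k)
        ≤ ENNReal.ofReal ((R * 2⁻¹ ^ (k+1)) ^ (-β)) * volume (ball (0:E) (R * 2⁻¹ ^ k)) := by
          gcongr
      _ = ENNReal.ofReal ((R * 2⁻¹ ^ (k+1)) ^ (-β)) * (ENNReal.ofReal ((R * 2⁻¹ ^ k) ^ d) *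
            volume (ball (0:E) 1)) := by rw [stmt16_volball d hd _ (by positivity)]
      _ = ENNReal.ofReal ((R * 2⁻¹ ^ (k+1)) ^ (-β) * (R * 2⁻¹ ^ k) ^ (d:ℝ)) *
            volume (ball (0:E) 1) := by
          rw [ENNReal.ofReal_mul (by positivity), Real.rpow_natCast, mul_assoc]
      _ = _ := by
          rw [stmt16_key_real R β hR d k, ENNReal.ofReal_mul (by positivity),
            ENNReal.ofReal_pow (by positivity)]
  calc ∫⁻ x in ball (0:E) R, f x
      ≤ ∫⁻ x in (⋃ k, A k) ∪ {0}, f x := lintegral_mono_set (stmt16_cover R hR)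
    _ ≤ (∫⁻ x in ⋃ k, A k, f x) + ∫⁻ x in ({0} : Set E), f x := lintegral_union_le _ _ _
    _ = ∫⁻ x in ⋃ k, A k, f x := by
        rw [setLIntegral_measure_zero _ _ (measure_singleton _), add_zero]
    _ ≤ ∑' k, ∫⁻ x in A k, f x := lintegral_iUnion_le _ _
    _ ≤ ∑' k, (ENNReal.ofReal (R ^ ((d:ℝ) - β) * 2 ^ β) *
          ENNReal.ofReal ((2⁻¹:ℝ) ^ ((d:ℝ) - β)) ^ k * volume (ball (0:E) 1)) :=
        ENNReal.tsum_le_tsum hterm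
    _ = ENNReal.ofReal (R ^ ((d:ℝ) - β)) * stmt16Cst d β * volume (ball (0:E) 1) := by
        rw [ENNReal.tsum_mul_right, ENNReal.tsum_mul_left, ENNReal.tsum_geometric, stmt16Cst,
          ENNReal.ofReal_mul (by positivity)]
        ring

lemma stmt16_Xcalc (d : ℕ) {p u α : ℝ} (hp' : 0 < p) (hu : 0 < u) {r : ℝ} (hr : 0 < r)
    {v c : ℝ≥0∞} (hv0 : v ≠ 0) (hvt : v ≠ ⊤) (hct : c ≠ ⊤) :
    (ENNReal.ofReal (r ^ d) * v) ^ (1/u - 1/p) *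
      (ENNReal.ofReal (r ^ ((d:ℝ) - α * p)) * c * v) ^ (1/p) =
    ENNReal.ofReal r ^ ((d:ℝ)/u - α) * v ^ (1/u) * c ^ (1/p) := by
  set ρ := ENNReal.ofReal r with hρ
  have hρ0 : ρ ≠ 0 := (ENNReal.ofReal_pos.2 hr).ne'
  have hρt : ρ ≠ ⊤ := ENNReal.ofReal_ne_top
  have h1 : ENNReal.ofReal (r ^ d) = ρ ^ (d:ℝ) := by
    rw [hρ, ENNReal.ofReal_rpow_of_pos hr, Real.rpow_natCast]
  have h2 : ENNReal.ofReal (r ^ ((d:ℝ) - α * p)) = ρ ^ ((d:ℝ) - α * p) := by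
    rw [hρ, ENNReal.ofReal_rpow_of_pos hr]
  have hρd : ρ ^ (d:ℝ) ≠ ⊤ := by simp [ENNReal.rpow_eq_top_iff, hρ0, hρt]
  have hρd2 : ρ ^ ((d:ℝ) - α * p) ≠ ⊤ := by simp [ENNReal.rpow_eq_top_iff, hρ0, hρt]
  rw [h1, h2, ENNReal.mul_rpow_of_ne_top hρd hvt,
    ENNReal.mul_rpow_of_ne_top (ENNReal.mul_ne_top hρd2 hct) hvt,
    ENNReal.mul_rpow_of_ne_top hρd2 hct,
    ← ENNReal.rpow_mul, ← ENNReal.rpow_mul]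
  have e1 : (d:ℝ) * (1/u - 1/p) + ((d:ℝ) - α * p) * (1/p) = (d:ℝ)/u - α := by
    field_simp; ring
  have e2 : (1/u - 1/p) + 1/p = 1/u := by ring
  calc ρ ^ ((d:ℝ) * (1/u - 1/p)) * v ^ (1/u - 1/p) *
        (ρ ^ (((d:ℝ) - α * p) * (1/p)) * c ^ (1/p) * v ^ (1/p))
      = (ρ ^ ((d:ℝ) * (1/u - 1/p)) * ρ ^ (((d:ℝ) - α * p) * (1/p))) *
        (v ^ (1/u - 1/p) * v ^ (1/p)) * c ^ (1/p) := by ring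
    _ = ρ ^ ((d:ℝ)/u - α) * v ^ (1/u) * c ^ (1/p) := by
        rw [← ENNReal.rpow_add _ _ hρ0 hρt, ← ENNReal.rpow_add _ _ hv0 hvt, e1, e2]

/-- For `f_α(x) = ψ(x)|x|^{−α}` with a cutoff `ψ` (`ψ = 1` on `|x| ≤ 1`, `ψ = 0` on `|x| ≥ 3/2`,
`0 ≤ ψ ≤ 1`): `f_α ∈ M^u_p(ℝ^d)` iff `α ≤ d/u`; and for `α = d/u` the quantity
`|B(0,r)|^{1/u−1/p} ‖f_α‖_{L_p(B(0,r))}` does not tend to `0` as `r → 0`. -/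
theorem stmt_16 (d : ℕ) (hd : 0 < d) (p u α : ℝ) (hp : 1 ≤ p) (hpu : p < u) (hα : 0 < α)
    (ψ : EuclideanSpace ℝ (Fin d) → ℝ) (hmeas : Measurable ψ)
    (hrange : ∀ x, ψ x ∈ Set.Icc (0 : ℝ) 1)
    (hone : ∀ x : EuclideanSpace ℝ (Fin d), ‖x‖ ≤ 1 → ψ x = 1)
    (hzero : ∀ x : EuclideanSpace ℝ (Fin d), 3 / 2 ≤ ‖x‖ → ψ x = 0) :
    (α ≤ (d : ℝ) / u →
      (⨆ (y : EuclideanSpace ℝ (Fin d)) (r : ℝ) (_ : 0 < r),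
        (volume (ball y r)) ^ (1 / u - 1 / p) *
          (∫⁻ x in ball y r, ENNReal.ofReal (|ψ x * ‖x‖ ^ (-α)| ^ p)) ^ (1 / p)) ≠ ∞) ∧
    ((d : ℝ) / u < α →
      (⨆ (y : EuclideanSpace ℝ (Fin d)) (r : ℝ) (_ : 0 < r),
        (volume (ball y r)) ^ (1 / u - 1 / p) *
          (∫⁻ x in ball y r, ENNReal.ofReal (|ψ x * ‖x‖ ^ (-α)| ^ p)) ^ (1 / p)) = ∞) ∧
    (α = (d : ℝ) / u →
      ¬ Tendsto
        (fun r : ℝ =>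
          (volume (ball (0 : EuclideanSpace ℝ (Fin d)) r)) ^ (1 / u - 1 / p) *
            (∫⁻ x in ball (0 : EuclideanSpace ℝ (Fin d)) r,
              ENNReal.ofReal (|ψ x * ‖x‖ ^ (-α)| ^ p)) ^ (1 / p))
        (nhdsWithin 0 (Set.Ioi 0)) (nhds 0)) := by
  have hp' : (0:ℝ) < p := lt_of_lt_of_le one_pos hp
  have hu : (0:ℝ) < u := lt_trans hp' hpu
  have hd' : (0:ℝ) < d := by exact_mod_cast hd
  set v1 := volume (ball (0:EuclideanSpace ℝ (Fin d)) 1) with hv1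
  have hv10 : v1 ≠ 0 := (measure_ball_pos volume 0 one_pos).ne'
  have hv1t : v1 ≠ ⊤ := measure_ball_lt_top.ne
  -- pointwise facts
  have hg_le : ∀ x : EuclideanSpace ℝ (Fin d), ENNReal.ofReal (|ψ x * ‖x‖ ^ (-α)| ^ p) ≤
      ENNReal.ofReal (‖x‖ ^ (-(α * p))) := by
    intro x
    refine ENNReal.ofReal_le_ofReal ?_
    have habs : |ψ x * ‖x‖ ^ (-α)| ≤ ‖x‖ ^ (-α) := by
      rw [abs_mul, abs_of_nonneg (Real.rpow_nonneg (norm_nonneg x) _)]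
      have h1 : |ψ x| ≤ 1 := abs_le.2 ⟨by linarith [(hrange x).1], (hrange x).2⟩
      calc |ψ x| * ‖x‖ ^ (-α) ≤ 1 * ‖x‖ ^ (-α) :=
            mul_le_mul_of_nonneg_right h1 (Real.rpow_nonneg (norm_nonneg x) _)
        _ = ‖x‖ ^ (-α) := one_mul _
    calc |ψ x * ‖x‖ ^ (-α)| ^ p ≤ (‖x‖ ^ (-α)) ^ p :=
          Real.rpow_le_rpow (abs_nonneg _) habs hp'.le
      _ = ‖x‖ ^ (-(α * p)) := by rw [← Real.rpow_mul (norm_nonneg x), neg_mul]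
  have hg_eq : ∀ x : EuclideanSpace ℝ (Fin d), ‖x‖ ≤ 1 → ENNReal.ofReal (|ψ x * ‖x‖ ^ (-α)| ^ p) =
      ENNReal.ofReal (‖x‖ ^ (-(α * p))) := by
    intro x hx
    rw [hone x hx, one_mul, abs_of_nonneg (Real.rpow_nonneg (norm_nonneg x) _),
      ← Real.rpow_mul (norm_nonneg x), neg_mul]
  have hg_zero : ∀ x : EuclideanSpace ℝ (Fin d), (3/2 : ℝ) ≤ ‖x‖ → ENNReal.ofReal (|ψ x * ‖x‖ ^ (-α)| ^ p) = 0 := by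
    intro x hx
    rw [hzero x hx, zero_mul, abs_zero, Real.zero_rpow hp'.ne', ENNReal.ofReal_zero]
  have hmerge : ∀ s : ℝ, 0 < s → s ^ (-(α*p)) * s ^ d = s ^ ((d:ℝ) - α*p) := by
    intro s hs
    rw [← Real.rpow_natCast s d, ← Real.rpow_add hs]
    congr 1; ring
  set c0 := ENNReal.ofReal (1 - (2⁻¹:ℝ)^d) with hc0def
  have hc0pos : (0:ℝ) < 1 - (2⁻¹:ℝ)^d := by
    have : (2⁻¹:ℝ)^d < 1 := pow_lt_one₀ (by norm_num) (by norm_num) hd.ne'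
    linarith
  have hc00 : c0 ≠ 0 := (ENNReal.ofReal_pos.2 hc0pos).ne'
  have hc0t : c0 ≠ ⊤ := ENNReal.ofReal_ne_top
  -- lower bound
  have hlow : ∀ r : ℝ, 0 < r → r ≤ 1 →
      ENNReal.ofReal r ^ ((d:ℝ)/u - α) * v1 ^ (1/u) * c0 ^ (1/p) ≤
      (volume (ball (0:EuclideanSpace ℝ (Fin d)) r)) ^ (1/u - 1/p) *
        (∫⁻ x in ball (0:EuclideanSpace ℝ (Fin d)) r, ENNReal.ofReal (|ψ x * ‖x‖ ^ (-α)| ^ p)) ^ (1/p) := by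
    intro r hr hr1
    have hIr : ENNReal.ofReal (r ^ ((d:ℝ) - α * p)) * c0 * v1 ≤
        ∫⁻ x in ball (0:EuclideanSpace ℝ (Fin d)) r, ENNReal.ofReal (|ψ x * ‖x‖ ^ (-α)| ^ p) := by
      have hsub : ball (0:EuclideanSpace ℝ (Fin d)) (r/2) ⊆ ball 0 r := ball_subset_ball (by linarith)
      have hmS : MeasurableSet (ball (0:EuclideanSpace ℝ (Fin d)) r \ ball 0 (r/2)) :=
        measurableSet_ball.diff measurableSet_ball
      have hvolS : volume (ball (0:EuclideanSpace ℝ (Fin d)) r \ ball 0 (r/2)) =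
          ENNReal.ofReal (r^d * (1 - (2⁻¹:ℝ)^d)) * v1 := by
        rw [measure_diff hsub measurableSet_ball.nullMeasurableSet measure_ball_lt_top.ne,
          stmt16_volball d hd _ hr.le, stmt16_volball d hd _ (by linarith : (0:ℝ) ≤ r/2),
          ← ENNReal.sub_mul (fun _ _ => hv1t), ← ENNReal.ofReal_sub _ (by positivity)]
        congr 2
        rw [div_pow, div_eq_mul_inv, ← inv_pow]
        ring
      have hpt : ∀ x ∈ ball (0:EuclideanSpace ℝ (Fin d)) r \ ball 0 (r/2),
          ENNReal.ofReal (r ^ (-(α*p))) ≤ ENNReal.ofReal (|ψ x * ‖x‖ ^ (-α)| ^ p) := by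
        intro x hx
        have hx1 : ‖x‖ < r := by
          have := hx.1; rwa [mem_ball_zero_iff] at this
        have hx2 : r/2 ≤ ‖x‖ := by
          have := hx.2; rw [mem_ball_zero_iff] at this; push_neg at this; exact this
        rw [hg_eq x (hx1.le.trans hr1)]
        exact ENNReal.ofReal_le_ofReal
          (Real.rpow_le_rpow_of_nonpos (by linarith) hx1.le (neg_nonpos.2 (by positivity)))
      calc ENNReal.ofReal (r ^ ((d:ℝ) - α * p)) * c0 * v1
          = ENNReal.ofReal (r ^ (-(α*p))) * volume (ball (0:EuclideanSpace ℝ (Fin d)) r \ ball 0 (r/2)) := by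
            rw [hvolS, ← mul_assoc, ← ENNReal.ofReal_mul (by positivity),
              ← ENNReal.ofReal_mul (by positivity)]
            congr 2
            rw [← mul_assoc, hmerge r hr]
        _ = ∫⁻ _ in ball (0:EuclideanSpace ℝ (Fin d)) r \ ball 0 (r/2), ENNReal.ofReal (r ^ (-(α*p))) :=
            (setLIntegral_const _ _).symm
        _ ≤ ∫⁻ x in ball (0:EuclideanSpace ℝ (Fin d)) r \ ball 0 (r/2), ENNReal.ofReal (|ψ x * ‖x‖ ^ (-α)| ^ p) :=
            setLIntegral_mono' hmS hpt
        _ ≤ _ := lintegral_mono_set Set.diff_subset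
    rw [stmt16_volball d hd _ hr.le,
      ← stmt16_Xcalc d hp' hu hr hv10 hv1t hc0t]
    exact mul_le_mul_right (ENNReal.rpow_le_rpow hIr (by positivity)) _
  refine ⟨?_, ?_, ?_⟩
  · -- Part 1 : α ≤ d/u implies finiteness
    intro hle
    have hβ : (0:ℝ) < α * p := by positivity
    have hβd : α * p < d := by
      calc α * p ≤ ((d:ℝ)/u) * p := mul_le_mul_of_nonneg_right hle hp'.le
        _ = (d:ℝ) * (p/u) := by ring
        _ < (d:ℝ) * 1 := by
            exact mul_lt_mul_of_pos_left ((div_lt_one hu).2 hpu) hd'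
        _ = d := mul_one _
    have hθ : 1/u - 1/p ≤ 0 := by
      rw [sub_nonpos]
      exact one_div_le_one_div_of_le hp' hpu.le
    set c2 := ENNReal.ofReal ((3:ℝ) ^ ((d:ℝ) - α*p)) * stmt16Cst d (α*p) with hc2
    have hc2t : c2 ≠ ⊤ := ENNReal.mul_ne_top ofReal_ne_top (stmt16_Cst_ne_top d _ hβd)
    set M1 := (ENNReal.ofReal ((2⁻¹:ℝ)^d) * v1) ^ (1/u - 1/p) *
      (ENNReal.ofReal ((2:ℝ) ^ ((d:ℝ) - α*p)) * stmt16Cst d (α*p) * v1) ^ (1/p) with hM1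
    set M2 := v1 ^ (1/u) * c2 ^ (1/p) with hM2
    set M3 := v1 ^ (1/u) * (1:ℝ≥0∞) ^ (1/p) with hM3
    have hM1t : M1 ≠ ⊤ := by
      apply ENNReal.mul_ne_top
      · have hb0 : (ENNReal.ofReal ((2⁻¹:ℝ)^d) * v1) ≠ 0 :=
          mul_ne_zero (ENNReal.ofReal_pos.2 (by positivity)).ne' hv10
        have hbt : (ENNReal.ofReal ((2⁻¹:ℝ)^d) * v1) ≠ ⊤ :=
          ENNReal.mul_ne_top ofReal_ne_top hv1t
        rw [Ne, ENNReal.rpow_eq_top_iff]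
        rintro (⟨h1, -⟩ | ⟨h1, -⟩)
        exacts [hb0 h1, hbt h1]
      · exact (ENNReal.rpow_lt_top_of_nonneg (by positivity)
          (ENNReal.mul_ne_top (ENNReal.mul_ne_top ofReal_ne_top
            (stmt16_Cst_ne_top d _ hβd)) hv1t)).ne
    have hMt : M1 ⊔ (M2 ⊔ M3) ≠ ⊤ := by
      have hM2t : M2 ≠ ⊤ := ENNReal.mul_ne_top
        (ENNReal.rpow_lt_top_of_nonneg (by positivity) hv1t).ne
        (ENNReal.rpow_lt_top_of_nonneg (by positivity) hc2t).ne
      have hM3t : M3 ≠ ⊤ := ENNReal.mul_ne_top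
        (ENNReal.rpow_lt_top_of_nonneg (by positivity) hv1t).ne
        (by simp)
      simp [hM1t, hM2t, hM3t]
    have key : ∀ (y : EuclideanSpace ℝ (Fin d)) (r : ℝ), 0 < r →
        (volume (ball y r)) ^ (1/u - 1/p) *
          (∫⁻ x in ball y r, ENNReal.ofReal (|ψ x * ‖x‖ ^ (-α)| ^ p)) ^ (1/p) ≤
        M1 ⊔ (M2 ⊔ M3) := by
      intro y r hr
      rcases le_or_gt 2⁻¹ r with hr2 | hr2
      · -- big radius: use the full integral
        refine le_sup_of_le_left ?_
        have hIfull : (∫⁻ x in ball y r, ENNReal.ofReal (|ψ x * ‖x‖ ^ (-α)| ^ p)) ≤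
            ENNReal.ofReal ((2:ℝ) ^ ((d:ℝ) - α*p)) * stmt16Cst d (α*p) * v1 := by
          calc ∫⁻ x in ball y r, ENNReal.ofReal (|ψ x * ‖x‖ ^ (-α)| ^ p)
              ≤ ∫⁻ x, ENNReal.ofReal (|ψ x * ‖x‖ ^ (-α)| ^ p) :=
                setLIntegral_le_lintegral _ _
            _ = (∫⁻ x in ball (0:EuclideanSpace ℝ (Fin d)) 2, ENNReal.ofReal (|ψ x * ‖x‖ ^ (-α)| ^ p)) +
                ∫⁻ x in (ball (0:EuclideanSpace ℝ (Fin d)) 2)ᶜ, ENNReal.ofReal (|ψ x * ‖x‖ ^ (-α)| ^ p) :=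
                (lintegral_add_compl _ measurableSet_ball).symm
            _ = ∫⁻ x in ball (0:EuclideanSpace ℝ (Fin d)) 2, ENNReal.ofReal (|ψ x * ‖x‖ ^ (-α)| ^ p) := by
                have h0 : (∫⁻ x in (ball (0:EuclideanSpace ℝ (Fin d)) 2)ᶜ,
                    ENNReal.ofReal (|ψ x * ‖x‖ ^ (-α)| ^ p)) = 0 := by
                  refine le_antisymm ?_ zero_le
                  calc ∫⁻ x in (ball (0:EuclideanSpace ℝ (Fin d)) 2)ᶜ,
                        ENNReal.ofReal (|ψ x * ‖x‖ ^ (-α)| ^ p)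
                      ≤ ∫⁻ _ in (ball (0:EuclideanSpace ℝ (Fin d)) 2)ᶜ, (0:ℝ≥0∞) := by
                        refine setLIntegral_mono' measurableSet_ball.compl fun x hx => ?_
                        rw [Set.mem_compl_iff, mem_ball_zero_iff, not_lt] at hx
                        exact le_of_eq (hg_zero x (by linarith))
                    _ = 0 := by simp
                rw [h0, add_zero]
            _ ≤ ∫⁻ x in ball (0:EuclideanSpace ℝ (Fin d)) 2, ENNReal.ofReal (‖x‖ ^ (-(α*p))) :=
                setLIntegral_mono' measurableSet_ball fun x _ => hg_le x
            _ ≤ ENNReal.ofReal ((2:ℝ) ^ ((d:ℝ) - α*p)) * stmt16Cst d (α*p) * v1 :=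
                stmt16_lemA d hd hβ (by norm_num)
        refine mul_le_mul' ?_ (ENNReal.rpow_le_rpow hIfull (by positivity))
        refine stmt16_rpow_antitone ?_ hθ
        rw [← stmt16_volball d hd y (by norm_num : (0:ℝ) ≤ 2⁻¹)]
        exact measure_mono (ball_subset_ball hr2)
      · have hr1 : r ≤ 1 := by linarith
        by_cases hy : ‖y‖ ≤ 2 * r
        · -- near the origin
          refine le_sup_of_le_right (le_sup_of_le_left ?_)
          have hball : ball y r ⊆ ball (0:EuclideanSpace ℝ (Fin d)) (3*r) := by
            intro z hz
            rw [mem_ball] at hz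
            rw [mem_ball_zero_iff]
            have h1 : ‖z‖ ≤ ‖z - y‖ + ‖y‖ := by simpa using norm_add_le (z - y) y
            have h2 : ‖z - y‖ = dist z y := (dist_eq_norm z y).symm
            linarith [hz, h1, h2 ▸ hz]
          have hIbound : (∫⁻ x in ball y r, ENNReal.ofReal (|ψ x * ‖x‖ ^ (-α)| ^ p)) ≤
              ENNReal.ofReal (r ^ ((d:ℝ) - α * p)) * c2 * v1 := by
            calc ∫⁻ x in ball y r, ENNReal.ofReal (|ψ x * ‖x‖ ^ (-α)| ^ p)
                ≤ ∫⁻ x in ball y r, ENNReal.ofReal (‖x‖ ^ (-(α*p))) :=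
                  setLIntegral_mono' measurableSet_ball fun x _ => hg_le x
              _ ≤ ∫⁻ x in ball (0:EuclideanSpace ℝ (Fin d)) (3*r), ENNReal.ofReal (‖x‖ ^ (-(α*p))) :=
                  lintegral_mono_set hball
              _ ≤ ENNReal.ofReal ((3*r) ^ ((d:ℝ) - α*p)) * stmt16Cst d (α*p) * v1 :=
                  stmt16_lemA d hd hβ (by linarith)
              _ = ENNReal.ofReal (r ^ ((d:ℝ) - α * p)) * c2 * v1 := by
                  rw [Real.mul_rpow (by norm_num) hr.le,
                    ENNReal.ofReal_mul (by positivity), hc2]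
                  ring
          calc (volume (ball y r)) ^ (1/u - 1/p) *
                (∫⁻ x in ball y r, ENNReal.ofReal (|ψ x * ‖x‖ ^ (-α)| ^ p)) ^ (1/p)
              ≤ (volume (ball y r)) ^ (1/u - 1/p) *
                (ENNReal.ofReal (r ^ ((d:ℝ) - α * p)) * c2 * v1) ^ (1/p) :=
                mul_le_mul_right (ENNReal.rpow_le_rpow hIbound (by positivity)) _
            _ = ENNReal.ofReal r ^ ((d:ℝ)/u - α) * v1 ^ (1/u) * c2 ^ (1/p) := by
                rw [stmt16_volball d hd y hr.le]
                exact stmt16_Xcalc d hp' hu hr hv10 hv1t hc2t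
            _ ≤ 1 * (v1 ^ (1/u) * c2 ^ (1/p)) := by
                rw [mul_assoc]
                refine mul_le_mul' (ENNReal.rpow_le_one (ENNReal.ofReal_le_one.2 hr1) ?_) le_rfl
                rw [sub_nonneg]
                exact hle
            _ = M2 := by rw [one_mul, hM2]
        · -- far from the origin
          push_neg at hy
          refine le_sup_of_le_right (le_sup_of_le_right ?_)
          have hpt2 : ∀ x ∈ ball y r, ENNReal.ofReal (|ψ x * ‖x‖ ^ (-α)| ^ p) ≤
              ENNReal.ofReal (r ^ (-(α*p))) := by
            intro x hx
            have hrx : r ≤ ‖x‖ := by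
              rw [mem_ball] at hx
              have h1 : ‖y‖ - ‖x‖ ≤ ‖y - x‖ := norm_sub_norm_le y x
              have h2 : ‖y - x‖ = dist x y := by rw [← dist_eq_norm, dist_comm]
              linarith
            exact (hg_le x).trans (ENNReal.ofReal_le_ofReal
              (Real.rpow_le_rpow_of_nonpos hr hrx (neg_nonpos.2 (by positivity))))
          have hIbound : (∫⁻ x in ball y r, ENNReal.ofReal (|ψ x * ‖x‖ ^ (-α)| ^ p)) ≤
              ENNReal.ofReal (r ^ ((d:ℝ) - α * p)) * 1 * v1 := by
            calc ∫⁻ x in ball y r, ENNReal.ofReal (|ψ x * ‖x‖ ^ (-α)| ^ p)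
                ≤ ∫⁻ _ in ball y r, ENNReal.ofReal (r ^ (-(α*p))) :=
                  setLIntegral_mono' measurableSet_ball hpt2
              _ = ENNReal.ofReal (r ^ (-(α*p))) * volume (ball y r) := setLIntegral_const _ _
              _ = ENNReal.ofReal (r ^ ((d:ℝ) - α * p)) * 1 * v1 := by
                  rw [stmt16_volball d hd y hr.le, ← mul_assoc,
                    ← ENNReal.ofReal_mul (by positivity), hmerge r hr, mul_one]
          calc (volume (ball y r)) ^ (1/u - 1/p) *
                (∫⁻ x in ball y r, ENNReal.ofReal (|ψ x * ‖x‖ ^ (-α)| ^ p)) ^ (1/p)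
              ≤ (volume (ball y r)) ^ (1/u - 1/p) *
                (ENNReal.ofReal (r ^ ((d:ℝ) - α * p)) * 1 * v1) ^ (1/p) :=
                mul_le_mul_right (ENNReal.rpow_le_rpow hIbound (by positivity)) _
            _ = ENNReal.ofReal r ^ ((d:ℝ)/u - α) * v1 ^ (1/u) * (1:ℝ≥0∞) ^ (1/p) := by
                rw [stmt16_volball d hd y hr.le]
                exact stmt16_Xcalc d hp' hu hr hv10 hv1t (by simp)
            _ ≤ 1 * (v1 ^ (1/u) * (1:ℝ≥0∞) ^ (1/p)) := by
                rw [mul_assoc]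
                refine mul_le_mul' (ENNReal.rpow_le_one (ENNReal.ofReal_le_one.2 hr1) ?_) le_rfl
                rw [sub_nonneg]; exact hle
            _ = M3 := by rw [one_mul, hM3]
    refine ne_top_of_le_ne_top hMt ?_
    refine iSup_le fun y => iSup_le fun r => iSup_le fun hr => key y r hr
  · -- Part 2 : d/u < α implies sup = ∞
    intro hlt
    by_contra hS
    set S := ⨆ (y : EuclideanSpace ℝ (Fin d)) (r : ℝ) (_ : 0 < r),
      (volume (ball y r)) ^ (1/u - 1/p) *
        (∫⁻ x in ball y r, ENNReal.ofReal (|ψ x * ‖x‖ ^ (-α)| ^ p)) ^ (1/p) with hSdef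
    set K : ℝ≥0∞ := v1 ^ (1/u) * c0 ^ (1/p) with hK
    have hK0 : K ≠ 0 := by
      rw [hK]
      refine mul_ne_zero ?_ ?_ <;> simp [ENNReal.rpow_eq_zero_iff, hv10, hv1t, hc00, hc0t]
    have hKt : K ≠ ⊤ := ENNReal.mul_ne_top
      (ENNReal.rpow_lt_top_of_nonneg (by positivity) hv1t).ne
      (ENNReal.rpow_lt_top_of_nonneg (by positivity) hc0t).ne
    set t := α - (d:ℝ)/u with ht
    have ht0 : 0 < t := by rw [ht]; linarith
    have hSK : S / K ≠ ⊤ := by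
      simp [ENNReal.div_eq_top, hS, hK0]
    obtain ⟨n, hn, hn1⟩ :=
      (((tendsto_rpow_atTop ht0).comp tendsto_natCast_atTop_atTop).eventually_gt_atTop
        ((S / K).toReal)).and (eventually_ge_atTop 1) |>.exists
    have hnr : (0:ℝ) < ((n:ℝ))⁻¹ := by
      have : (0:ℝ) < n := by exact_mod_cast hn1
      positivity
    have hnpos : (0:ℝ) < n := by exact_mod_cast hn1
    have hterm : ENNReal.ofReal ((n:ℝ) ^ t) * K ≤ S := by
      have h1 := hlow ((n:ℝ))⁻¹ hnr (by
        rw [inv_le_one_iff₀]; right; exact_mod_cast hn1)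
      have h2 : ENNReal.ofReal ((n:ℝ)⁻¹) ^ ((d:ℝ)/u - α) = ENNReal.ofReal ((n:ℝ) ^ t) := by
        rw [ENNReal.ofReal_rpow_of_pos hnr]
        congr 1
        rw [show (d:ℝ)/u - α = -t by rw [ht]; ring,
          Real.rpow_neg (by positivity), Real.inv_rpow (by positivity), inv_inv]
      rw [h2, mul_assoc, ← hK] at h1
      refine h1.trans ?_
      exact le_iSup_of_le (0:EuclideanSpace ℝ (Fin d)) (le_iSup_of_le ((n:ℝ))⁻¹ (le_iSup_of_le hnr le_rfl))
    have hgt : S < ENNReal.ofReal ((n:ℝ) ^ t) * K := by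
      refine (ENNReal.div_lt_iff (Or.inl hK0) (Or.inl hKt)).1 ?_
      rw [ENNReal.lt_ofReal_iff_toReal_lt hSK]
      simpa using hn
    exact absurd hterm (not_le.2 hgt)
  · -- Part 3 : α = d/u implies no convergence to zero
    intro hα' htend
    have hKpos : (0:ℝ≥0∞) < v1 ^ (1/u) * c0 ^ (1/p) := by
      refine ENNReal.mul_pos ?_ ?_ <;>
        simp [ENNReal.rpow_eq_zero_iff, hv10, hv1t, hc00, hc0t]
    have hev1 : ∀ᶠ r in 𝓝[>] (0:ℝ), 0 < r := eventually_mem_nhdsWithin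
    have hev2 : ∀ᶠ r in 𝓝[>] (0:ℝ), r ≤ 1 := by
      have : ∀ᶠ r in 𝓝 (0:ℝ), r < 1 := gt_mem_nhds (by norm_num)
      exact (this.filter_mono nhdsWithin_le_nhds).mono fun r hr => hr.le
    obtain ⟨r, hQ, hr, hr1⟩ :=
      ((htend.eventually_lt_const hKpos).and (hev1.and hev2)).exists
    have h1 := hlow r hr hr1
    rw [show (d:ℝ)/u - α = 0 by rw [hα']; ring, ENNReal.rpow_zero, one_mul] at h1
    exact absurd h1 (not_le.2 hQ)
end

section
/- Let d ∈ ℕ, m ∈ ℕ, α > 0, 1 ≤ p < u < ∞ with m + α = d/u, and let A := { x ∈ ℝ^d : |x| < 1, x_1 ≥ max(|x_2|, …, |x_d|)/c } for a constant c ≥ 1. Then there exist constants E_1, E_2 > 0 such that for all 0 < r < 1, |B(0,r)|^{1/u − 1/p} ( ∫_{B(0,r) ∩ A} |x|^{−(α+m)p} dx )^{1/p} ≥ E_2 r^{d/u − (α+m)} = E_2 > 0. In particular this quantity does not tend to 0 as r → 0. -/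
open MeasureTheory Metric ENNReal Filter

/-- For the cone `A = {x : |x| < 1, x₁ ≥ max(|x₂|,…,|x_d|)/c}` and `m + α = d/u`, there are
`E₁, E₂ > 0` such that for `0 < r < 1`,
`|B(0,r)|^{1/u−1/p} (∫_{B(0,r)∩A} |x|^{−(α+m)p} dx)^{1/p} ≥ E₂ r^{d/u−(α+m)} = E₂ > 0`;
in particular this quantity does not tend to `0` as `r → 0`. -/
theorem stmt_19 (d m : ℕ) (hd : 0 < d) (hm : 0 < m) (α p u c : ℝ)
    (hα : 0 < α) (hp : 1 ≤ p) (hpu : p < u) (hmα : (m : ℝ) + α = (d : ℝ) / u) (hc : 1 ≤ c) :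
    ∃ E₁ E₂ : ℝ, 0 < E₁ ∧ 0 < E₂ ∧
      (∀ r : ℝ, 0 < r → r < 1 →
        ENNReal.ofReal (E₂ * r ^ ((d : ℝ) / u - (α + m))) ≤
          (volume (ball (0 : EuclideanSpace ℝ (Fin d)) r)) ^ (1 / u - 1 / p) *
            (∫⁻ x in ball (0 : EuclideanSpace ℝ (Fin d)) r ∩
                {x : EuclideanSpace ℝ (Fin d) | ‖x‖ < 1 ∧ 0 ≤ x ⟨0, hd⟩ ∧
                  ∀ k : Fin d, k ≠ ⟨0, hd⟩ → |x k| ≤ c * x ⟨0, hd⟩},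
              ENNReal.ofReal (‖x‖ ^ (-((α + m) * p)))) ^ (1 / p) ∧
        E₂ * r ^ ((d : ℝ) / u - (α + m)) = E₂) ∧
      ¬ Tendsto
        (fun r : ℝ =>
          (volume (ball (0 : EuclideanSpace ℝ (Fin d)) r)) ^ (1 / u - 1 / p) *
            (∫⁻ x in ball (0 : EuclideanSpace ℝ (Fin d)) r ∩
                {x : EuclideanSpace ℝ (Fin d) | ‖x‖ < 1 ∧ 0 ≤ x ⟨0, hd⟩ ∧
                  ∀ k : Fin d, k ≠ ⟨0, hd⟩ → |x k| ≤ c * x ⟨0, hd⟩},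
              ENNReal.ofReal (‖x‖ ^ (-((α + m) * p)))) ^ (1 / p))
        (nhdsWithin 0 (Set.Ioi 0)) (nhds 0) := by
  set E := EuclideanSpace ℝ (Fin d)
  have hp0 : (0:ℝ) < p := lt_of_lt_of_le one_pos hp
  have hu0 : (0:ℝ) < u := lt_trans hp0 hpu
  haveI : Nontrivial E := Module.nontrivial_of_finrank_pos (R := ℝ)
    (by rw [finrank_euclideanSpace_fin]; exact hd)
  set i0 : Fin d := ⟨0, hd⟩ with hi0
  set s : ℝ := Real.sqrt d with hs
  have hs0 : 0 < s := Real.sqrt_pos.2 (by exact_mod_cast hd)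
  set t : ℝ := 1 / (4 * s) with ht
  have ht0 : 0 < t := by positivity
  set v : ℝ := (volume (ball (0 : E) 1)).toReal with hv
  have hvball : volume (ball (0 : E) 1) ≠ ⊤ := measure_ball_lt_top.ne
  have hv0 : 0 < v := ENNReal.toReal_pos (measure_ball_pos volume 0 one_pos).ne' hvball
  set σ : ℝ := 1 / u - 1 / p with hσ
  set β : ℝ := (α + m) * p with hβ
  have hβ0 : 0 < β := by
    rw [hβ]; positivity
  set E₂ : ℝ := v ^ σ * (t ^ d) ^ (1 / p) with hE₂
  have hE₂0 : 0 < E₂ := by positivity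
  have hexp0 : (d : ℝ) / u - (α + m) = 0 := by rw [← hmα]; ring
  -- main lower bound
  have main : ∀ r : ℝ, 0 < r → r < 1 →
      ENNReal.ofReal (E₂ * r ^ ((d : ℝ) / u - (α + m))) ≤
        (volume (ball (0 : E) r)) ^ σ *
          (∫⁻ x in ball (0 : E) r ∩
              {x : E | ‖x‖ < 1 ∧ 0 ≤ x i0 ∧ ∀ k : Fin d, k ≠ i0 → |x k| ≤ c * x i0},
            ENNReal.ofReal (‖x‖ ^ (-β))) ^ (1 / p) := by
    intro r hr hr1
    set a : ℝ := r * t with ha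
    have ha0 : 0 < a := by positivity
    -- the box
    set T : Set (Fin d → ℝ) :=
      Set.univ.pi fun k => Set.Icc (if k = i0 then a else 0) (if k = i0 then 2 * a else a)
      with hT
    have hTm : MeasurableSet T := MeasurableSet.univ_pi fun k => measurableSet_Icc
    set box : Set E := (MeasurableEquiv.toLp 2 (Fin d → ℝ)).symm ⁻¹' T with hbox
    have hboxm : MeasurableSet box := (MeasurableEquiv.toLp 2 (Fin d → ℝ)).symm.measurable hTm
    have hmem : ∀ x : E, x ∈ box ↔ ∀ k : Fin d,
        x k ∈ Set.Icc (if k = i0 then a else 0) (if k = i0 then 2 * a else a) := by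
      intro x
      simp [hbox, hT, Set.mem_pi,
        show ∀ y : E, (MeasurableEquiv.toLp 2 (Fin d → ℝ)).symm y = y.ofLp from fun _ => rfl, Pi.le_def, forall_and,
        Set.mem_Icc]
    -- volume of the box
    have hvolbox : volume box = ENNReal.ofReal (a ^ d) := by
      rw [hbox, (EuclideanSpace.volume_preserving_symm_measurableEquiv_toLp (Fin d)).measure_preimage
        hTm.nullMeasurableSet, hT, volume_pi_pi]
      have hfac : ∀ k : Fin d,
          volume (Set.Icc (if k = i0 then a else 0) (if k = i0 then 2 * a else a))
            = ENNReal.ofReal a := by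
        intro k
        by_cases h : k = i0
        · rw [if_pos h, if_pos h, Real.volume_Icc, show 2 * a - a = a by ring]
        · rw [if_neg h, if_neg h, Real.volume_Icc, sub_zero]
      rw [Finset.prod_congr rfl fun k _ => hfac k, Finset.prod_const, Finset.card_univ,
        Fintype.card_fin, ← ENNReal.ofReal_pow ha0.le]
    -- properties of points in the box
    have hboxsub : box ⊆ ball (0 : E) r ∩
        {x : E | ‖x‖ < 1 ∧ 0 ≤ x i0 ∧ ∀ k : Fin d, k ≠ i0 → |x k| ≤ c * x i0} := by
      intro x hx
      rw [hmem] at hx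
      have hxi0 : a ≤ x i0 ∧ x i0 ≤ 2 * a := by simpa using hx i0
      have hother : ∀ k : Fin d, k ≠ i0 → 0 ≤ x k ∧ x k ≤ a := by
        intro k hk; simpa [hk] using hx k
      have habs : ∀ k : Fin d, |x k| ≤ 2 * a := by
        intro k
        by_cases h : k = i0
        · subst h; rw [abs_of_nonneg (le_trans ha0.le hxi0.1)]; exact hxi0.2
        · rcases hother k h with ⟨h1, h2⟩
          rw [abs_of_nonneg h1]; nlinarith
      have hnorm : ‖x‖ ≤ r / 2 := by
        have h2a : 2 * a = r / (2 * s) := by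
          rw [ha, ht]; field_simp; ring
        rw [EuclideanSpace.norm_eq]
        have hsum : (∑ i, ‖x i‖ ^ 2) ≤ (d : ℝ) * (2 * a) ^ 2 := by
          calc (∑ i, ‖x i‖ ^ 2) ≤ ∑ _i : Fin d, (2 * a) ^ 2 := by
                apply Finset.sum_le_sum
                intro i _
                have := habs i
                rw [Real.norm_eq_abs]
                nlinarith [abs_nonneg (x i)]
            _ = (d : ℝ) * (2 * a) ^ 2 := by
                rw [Finset.sum_const, Finset.card_univ, Fintype.card_fin, nsmul_eq_mul]
        have hd2 : (d : ℝ) * (2 * a) ^ 2 ≤ (r / 2) ^ 2 := by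
          rw [h2a]
          have hsd : s ^ 2 = (d : ℝ) := Real.sq_sqrt (by positivity)
          have hdpos : (0:ℝ) < d := by exact_mod_cast hd
          apply le_of_eq
          rw [div_pow, mul_pow, hsd]
          field_simp
        calc Real.sqrt (∑ i, ‖x i‖ ^ 2) ≤ Real.sqrt ((r / 2) ^ 2) := by
              apply Real.sqrt_le_sqrt; linarith
          _ = r / 2 := Real.sqrt_sq (by positivity)
      refine ⟨?_, ?_, le_trans ha0.le hxi0.1, ?_⟩
      · rw [mem_ball_zero_iff]; linarith
      · show ‖x‖ < 1; linarith
      · intro k hk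
        rcases hother k hk with ⟨h1, h2⟩
        rw [abs_of_nonneg h1]
        calc x k ≤ a := h2
          _ ≤ x i0 := hxi0.1
          _ ≤ c * x i0 := le_mul_of_one_le_left (le_trans ha0.le hxi0.1) hc
    -- lower bound on integrand over the box
    have hptwise : ∀ x ∈ box, ENNReal.ofReal (r ^ (-β)) ≤ ENNReal.ofReal (‖x‖ ^ (-β)) := by
      intro x hx
      apply ENNReal.ofReal_le_ofReal
      have hx' := hboxsub hx
      have hxr : ‖x‖ < r := mem_ball_zero_iff.1 hx'.1
      have hxpos : 0 < ‖x‖ := by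
        rw [hmem] at hx
        have hxi0 : a ≤ x i0 := by simpa using (hx i0).1
        have hxne : x ≠ 0 := by
          intro h0
          have : x i0 = 0 := by rw [h0]; rfl
          rw [this] at hxi0; linarith
        exact norm_pos_iff.2 hxne
      exact Real.rpow_le_rpow_of_nonpos hxpos hxr.le (by linarith : -β ≤ 0)
    -- lower bound on the integral
    have hI : ENNReal.ofReal (r ^ (-β)) * ENNReal.ofReal (a ^ d) ≤
        ∫⁻ x in ball (0 : E) r ∩
            {x : E | ‖x‖ < 1 ∧ 0 ≤ x i0 ∧ ∀ k : Fin d, k ≠ i0 → |x k| ≤ c * x i0},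
          ENNReal.ofReal (‖x‖ ^ (-β)) := by
      calc ENNReal.ofReal (r ^ (-β)) * ENNReal.ofReal (a ^ d)
          = ∫⁻ _x in box, ENNReal.ofReal (r ^ (-β)) := by
            rw [setLIntegral_const, hvolbox]
        _ ≤ ∫⁻ x in box, ENNReal.ofReal (‖x‖ ^ (-β)) := setLIntegral_mono' hboxm hptwise
        _ ≤ _ := lintegral_mono_set hboxsub
    -- volume of the ball
    have hV : volume (ball (0 : E) r) = ENNReal.ofReal (r ^ d * v) := by
      rw [Measure.addHaar_ball volume (0 : E) hr.le]
      rw [show Module.finrank ℝ E = d from finrank_euclideanSpace_fin]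
      rw [ENNReal.ofReal_mul (by positivity : (0:ℝ) ≤ r ^ d), hv,
        ENNReal.ofReal_toReal hvball]
    -- the key real identity
    have key : E₂ * r ^ ((d : ℝ) / u - (α + m)) =
        (r ^ d * v) ^ σ * (r ^ (-β) * a ^ d) ^ (1 / p) := by
      have hcomb : r ^ ((d : ℝ) * σ) * r ^ ((-β + (d : ℝ)) * (1 / p)) =
          r ^ ((d : ℝ) / u - (α + m)) := by
        rw [← Real.rpow_add hr]
        congr 1
        rw [hσ, hβ]
        field_simp
        ring
      rw [ha, mul_pow, ← Real.rpow_natCast r d, ← Real.rpow_natCast t d,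
        Real.mul_rpow (Real.rpow_nonneg hr.le _) hv0.le,
        ← Real.rpow_mul hr.le, ← mul_assoc (r ^ (-β)), ← Real.rpow_add hr,
        Real.mul_rpow (Real.rpow_nonneg hr.le _) (Real.rpow_nonneg ht0.le _),
        ← Real.rpow_mul hr.le, hE₂, ← Real.rpow_natCast t d, ← hcomb]
      ring
    -- put everything together
    calc ENNReal.ofReal (E₂ * r ^ ((d : ℝ) / u - (α + m)))
        = ENNReal.ofReal ((r ^ d * v) ^ σ * (r ^ (-β) * a ^ d) ^ (1 / p)) := by rw [key]
      _ = ENNReal.ofReal ((r ^ d * v) ^ σ) *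
            ENNReal.ofReal ((r ^ (-β) * a ^ d) ^ (1 / p)) :=
          ENNReal.ofReal_mul (Real.rpow_nonneg (by positivity) _)
      _ ≤ (volume (ball (0 : E) r)) ^ σ *
          (∫⁻ x in ball (0 : E) r ∩
              {x : E | ‖x‖ < 1 ∧ 0 ≤ x i0 ∧ ∀ k : Fin d, k ≠ i0 → |x k| ≤ c * x i0},
            ENNReal.ofReal (‖x‖ ^ (-β))) ^ (1 / p) := by
          apply mul_le_mul'
          · rw [hV, ← ENNReal.ofReal_rpow_of_pos (by positivity)]
          · rw [← ENNReal.ofReal_rpow_of_pos (by positivity), ENNReal.ofReal_mul (by positivity)]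
            exact ENNReal.rpow_le_rpow hI (by positivity)
  refine ⟨1, E₂, one_pos, hE₂0, fun r hr hr1 => ⟨main r hr hr1, ?_⟩, ?_⟩
  · rw [hexp0, Real.rpow_zero, mul_one]
  · intro h
    have hE : (0 : ℝ≥0∞) < ENNReal.ofReal E₂ := ENNReal.ofReal_pos.2 hE₂0
    have h1 : ∀ᶠ r in nhdsWithin (0:ℝ) (Set.Ioi 0), r ∈ Set.Ioi (0:ℝ) :=
      eventually_mem_nhdsWithin
    have h2 : ∀ᶠ r in nhdsWithin (0:ℝ) (Set.Ioi 0), r < 1 :=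
      (eventually_lt_nhds one_pos).filter_mono nhdsWithin_le_nhds
    have h3 := h.eventually_lt_const hE
    rcases (h1.and (h2.and h3)).exists with ⟨r, hr, hr1, hlt⟩
    have hmain := main r hr hr1
    rw [hexp0, Real.rpow_zero, mul_one] at hmain
    exact absurd (lt_of_le_of_lt hmain hlt) (lt_irrefl _)
end
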